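/- For any two constants M₁ > 0 and M₂ > 0, the integral ∫₀¹ ds / β_{M₁,φ}(s) is infinite if and only if the integral ∫₀¹ ds / β_{M₂,φ}(s) is infinite; that is, the admissibility condition is independent of the choice of M. -/

import Mathlib

open Set Filter Topology MeasureTheory

private lemma beta_inf_le (p₀ : ℝ) (hp₀ : 1 < p₀) (φ : ℝ → ℝ)
    (hφpos : ∀ p ≥ p₀, 0 < φ p) (M M' : ℝ) (hM : 0 < M) (hM' : 0 < M')
    (s : ℝ) (hs : s ∈ Ioo (0:ℝ) 1) :
    sInf ((fun ε => M' ^ ε * s ^ (1 - ε) * φ (1 / ε)) '' Ioc 0 (1 / p₀)) ≤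
      max 1 ((M' / M) ^ (1 / p₀)) *
      sInf ((fun ε => M ^ ε * s ^ (1 - ε) * φ (1 / ε)) '' Ioc 0 (1 / p₀)) := by
  have hp₀pos : (0:ℝ) < p₀ := lt_trans one_pos hp₀
  have hinv : (0:ℝ) < 1 / p₀ := by positivity
  set C : ℝ := max 1 ((M' / M) ^ (1 / p₀)) with hC
  have hC1 : (1:ℝ) ≤ C := le_max_left _ _
  have hCpos : (0:ℝ) < C := lt_of_lt_of_le one_pos hC1
  have hne : (Ioc (0:ℝ) (1 / p₀)).Nonempty := ⟨1 / p₀, hinv, le_refl _⟩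
  -- positivity of values
  have hval : ∀ ε ∈ Ioc (0:ℝ) (1 / p₀), 0 < M ^ ε * s ^ (1 - ε) * φ (1 / ε) := by
    intro ε hε
    have hε0 : 0 < ε := hε.1
    have h1ε : p₀ ≤ 1 / ε := by
      rw [le_div_iff₀ hε0]
      calc p₀ * ε ≤ p₀ * (1 / p₀) := by
            exact mul_le_mul_of_nonneg_left hε.2 hp₀pos.le
        _ = 1 := by field_simp
    have := hφpos _ h1ε
    have hs0 : 0 < s := hs.1
    positivity
  have hbdd : BddBelow ((fun ε => M' ^ ε * s ^ (1 - ε) * φ (1 / ε)) '' Ioc 0 (1 / p₀)) := by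
    refine ⟨0, ?_⟩
    rintro x ⟨ε, hε, rfl⟩
    have hε0 : 0 < ε := hε.1
    have h1ε : p₀ ≤ 1 / ε := by
      rw [le_div_iff₀ hε0]
      calc p₀ * ε ≤ p₀ * (1 / p₀) := mul_le_mul_of_nonneg_left hε.2 hp₀pos.le
        _ = 1 := by field_simp
    have := hφpos _ h1ε
    have hs0 : 0 < s := hs.1
    positivity
  -- sInf S' ≤ C * x for every x in S
  have key : ∀ x ∈ (fun ε => M ^ ε * s ^ (1 - ε) * φ (1 / ε)) '' Ioc 0 (1 / p₀),
      sInf ((fun ε => M' ^ ε * s ^ (1 - ε) * φ (1 / ε)) '' Ioc 0 (1 / p₀)) / C ≤ x := by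
    rintro x ⟨ε, hε, rfl⟩
    rw [div_le_iff₀ hCpos]
    have hε0 : 0 < ε := hε.1
    have h1ε : p₀ ≤ 1 / ε := by
      rw [le_div_iff₀ hε0]
      calc p₀ * ε ≤ p₀ * (1 / p₀) := mul_le_mul_of_nonneg_left hε.2 hp₀pos.le
        _ = 1 := by field_simp
    have hφ := hφpos _ h1ε
    have hs0 : 0 < s := hs.1
    have hMε : M' ^ ε ≤ C * M ^ ε := by
      have hrw : M' ^ ε = (M' / M) ^ ε * M ^ ε := by
        rw [← Real.mul_rpow (by positivity) hM.le, div_mul_cancel₀ _ hM.ne']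
      rw [hrw]
      have hr : (M' / M) ^ ε ≤ C := by
        rcases le_or_gt (M' / M) 1 with h | h
        · exact le_trans (Real.rpow_le_one (by positivity) h hε0.le) hC1
        · exact le_trans (Real.rpow_le_rpow_of_exponent_le h.le hε.2) (le_max_right _ _)
      exact mul_le_mul_of_nonneg_right hr (Real.rpow_pos_of_pos hM _).le
    calc sInf ((fun ε => M' ^ ε * s ^ (1 - ε) * φ (1 / ε)) '' Ioc 0 (1 / p₀))
        ≤ M' ^ ε * s ^ (1 - ε) * φ (1 / ε) :=
          csInf_le hbdd ⟨ε, hε, rfl⟩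
      _ ≤ (C * M ^ ε) * s ^ (1 - ε) * φ (1 / ε) := by
          have h1 : (0:ℝ) ≤ s ^ (1 - ε) * φ (1 / ε) := by positivity
          calc M' ^ ε * s ^ (1 - ε) * φ (1 / ε)
              = M' ^ ε * (s ^ (1 - ε) * φ (1 / ε)) := by ring
            _ ≤ (C * M ^ ε) * (s ^ (1 - ε) * φ (1 / ε)) :=
                mul_le_mul_of_nonneg_right hMε h1
            _ = (C * M ^ ε) * s ^ (1 - ε) * φ (1 / ε) := by ring
      _ = M ^ ε * s ^ (1 - ε) * φ (1 / ε) * C := by ring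
  have h2 := le_csInf (hne.image _) key
  rw [div_le_iff₀ hCpos] at h2
  linarith [h2]

private lemma int_top_mono (p₀ : ℝ) (hp₀ : 1 < p₀) (φ : ℝ → ℝ)
    (hφpos : ∀ p ≥ p₀, 0 < φ p) (M M' : ℝ) (hM : 0 < M) (hM' : 0 < M')
    (H : ∫⁻ s in Ioo (0:ℝ) 1, ENNReal.ofReal
        (1 / sInf ((fun ε => M ^ ε * s ^ (1 - ε) * φ (1 / ε)) '' Ioc 0 (1 / p₀))) = ⊤) :
    ∫⁻ s in Ioo (0:ℝ) 1, ENNReal.ofReal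
        (1 / sInf ((fun ε => M' ^ ε * s ^ (1 - ε) * φ (1 / ε)) '' Ioc 0 (1 / p₀))) = ⊤ := by
  set C : ℝ := max 1 ((M' / M) ^ (1 / p₀)) with hC
  have hC1 : (1:ℝ) ≤ C := le_max_left _ _
  have hCpos : (0:ℝ) < C := lt_of_lt_of_le one_pos hC1
  have hpt : ∀ s ∈ Ioo (0:ℝ) 1,
      ENNReal.ofReal (1 / sInf ((fun ε => M ^ ε * s ^ (1 - ε) * φ (1 / ε)) '' Ioc 0 (1 / p₀)))
        ≤ ENNReal.ofReal C *
          ENNReal.ofReal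
            (1 / sInf ((fun ε => M' ^ ε * s ^ (1 - ε) * φ (1 / ε)) '' Ioc 0 (1 / p₀))) := by
    intro s hs
    set a := sInf ((fun ε => M ^ ε * s ^ (1 - ε) * φ (1 / ε)) '' Ioc 0 (1 / p₀)) with ha
    set b := sInf ((fun ε => M' ^ ε * s ^ (1 - ε) * φ (1 / ε)) '' Ioc 0 (1 / p₀)) with hb
    have hba : b ≤ C * a := beta_inf_le p₀ hp₀ φ hφpos M M' hM hM' s hs
    have hab : a ≤ max 1 ((M / M') ^ (1 / p₀)) * b :=
      beta_inf_le p₀ hp₀ φ hφpos M' M hM' hM s hs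
    rcases le_or_gt a 0 with ha0 | ha0
    · have h1a : 1 / a ≤ 0 := by
        rcases eq_or_lt_of_le ha0 with h | h
        · rw [h]; simp
        · exact (div_neg_of_pos_of_neg one_pos h).le
      rw [ENNReal.ofReal_of_nonpos h1a]
      exact zero_le
    · have hm1 : (0:ℝ) < max 1 ((M / M') ^ (1 / p₀)) :=
        lt_of_lt_of_le one_pos (le_max_left _ _)
      have hb0 : 0 < b := by nlinarith
      rw [← ENNReal.ofReal_mul hCpos.le]
      apply ENNReal.ofReal_le_ofReal
      rw [mul_one_div]
      rw [div_le_div_iff₀ ha0 hb0]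
      nlinarith
  have hmono := setLIntegral_mono' (μ := volume) measurableSet_Ioo hpt
  rw [H] at hmono
  rw [lintegral_const_mul' (ENNReal.ofReal C) _ ENNReal.ofReal_ne_top] at hmono
  by_contra hne
  exact absurd (top_le_iff.mp hmono) (ENNReal.mul_ne_top ENNReal.ofReal_ne_top hne)

/-- The admissibility condition `∫₀¹ ds / β_{M,φ}(s) = ∞` is independent of the choice of
`M > 0`: for `M₁, M₂ > 0`, the integral with `M₁` is infinite iff the one with `M₂` is. -/
theorem stmt_2 (p₀ : ℝ) (hp₀ : 1 < p₀) (φ : ℝ → ℝ)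
    (hφc : ContinuousOn φ (Ici p₀)) (hφpos : ∀ p ≥ p₀, 0 < φ p)
    (M₁ M₂ : ℝ) (hM₁ : 0 < M₁) (hM₂ : 0 < M₂) :
    (∫⁻ s in Ioo (0:ℝ) 1, ENNReal.ofReal
        (1 / sInf ((fun ε => M₁ ^ ε * s ^ (1 - ε) * φ (1 / ε)) '' Ioc 0 (1 / p₀))) = ⊤) ↔
    (∫⁻ s in Ioo (0:ℝ) 1, ENNReal.ofReal
        (1 / sInf ((fun ε => M₂ ^ ε * s ^ (1 - ε) * φ (1 / ε)) '' Ioc 0 (1 / p₀))) = ⊤) := by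
  constructor
  · exact int_top_mono p₀ hp₀ φ hφpos M₁ M₂ hM₁ hM₂
  · exact int_top_mono p₀ hp₀ φ hφpos M₂ M₁ hM₂ hM₁
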